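/- If 0 < τ < 2^{1/α}·(2α/(α+1)), then the nonlinear SFTR-1/2 Crank–Nicolson scheme is uniquely solvable: for every integer n ≥ 1 and all given vectors U^0, …, U^{n−1} ∈ ℝ^{M²}, there exists a unique vector U^n ∈ ℝ^{M²} satisfying τ^{−α} Σ_{m=0}^{n} ω_m (U^{n−m} − U^0) = ε² Δ_h (U^n + U^{n−1})/2 − f(U^{n−1}, U^n). -/

import Mathlib

/-- The SFTR-1/2 weights `ω_m`. -/
noncomputable def sftrW (α : ℝ) : ℕ → ℝ
  | 0 => (2 * α / (α + 1)) ^ α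
  | 1 => -α * (2 * α / (α + 1)) ^ (α + 1)
  | (m + 2) =>
      2 * α / (((m : ℝ) + 2) * (α + 1)) *
        (((((m : ℝ) + 2) - 1) / α - α) * sftrW α (m + 1) +
          (α - 1) / (2 * α) * (((m : ℝ) + 2) - 2) * sftrW α m)

open Kronecker in
/-- The periodic second-difference matrix `D`. -/
noncomputable def matD (M : ℕ) : Matrix (Fin M) (Fin M) ℝ := fun i j =>
  if i = j then -2
  else if i.1 + 1 = j.1 ∨ j.1 + 1 = i.1 then 1
  else if (i.1 = 0 ∧ j.1 = M - 1) ∨ (j.1 = 0 ∧ i.1 = M - 1) then 1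
  else 0

open Kronecker in
/-- The discrete Laplacian `Δ_h = h⁻²(I ⊗ D + D ⊗ I)`. -/
noncomputable def lapMat (M : ℕ) (h : ℝ) : Matrix (Fin M × Fin M) (Fin M × Fin M) ℝ :=
  (h ^ 2)⁻¹ • ((1 : Matrix (Fin M) (Fin M) ℝ) ⊗ₖ matD M + matD M ⊗ₖ (1 : Matrix (Fin M) (Fin M) ℝ))

/-- The nonlinear term `f(W, U)`. -/
noncomputable def fnl {M : ℕ} (W U : Fin M × Fin M → ℝ) : Fin M × Fin M → ℝ := fun i =>
  1 / 3 * U i ^ 3 + 1 / 2 * W i ^ 2 * U i + 1 / 6 * W i ^ 3 - 1 / 2 * (U i + W i)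

/-- `(U^n)` solves the SFTR-1/2 Crank–Nicolson scheme. -/
def solvesScheme (α ε τ h : ℝ) (M : ℕ) (U : ℕ → (Fin M × Fin M → ℝ)) : Prop :=
  ∀ n : ℕ, 1 ≤ n →
    (τ ^ (-α)) • ∑ m ∈ Finset.range (n + 1), sftrW α m • (U (n - m) - U 0) =
      ε ^ 2 • (lapMat M h).mulVec ((1 / 2 : ℝ) • (U n + U (n - 1))) - fnl (U (n - 1)) (U n)


open Finset

set_option linter.unusedSectionVars false
set_option maxHeartbeats 1000000

section Aux

variable {ι : Type*} [Fintype ι] [DecidableEq ι]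

lemma quad_symm (A : Matrix ι ι ℝ) (hsym : ∀ i j, A i j = A j i) (x y : ι → ℝ) :
    ∑ i, x i * ∑ j, A i j * y j = ∑ i, y i * ∑ j, A i j * x j := by
  simp_rw [Finset.mul_sum]
  rw [Finset.sum_comm]
  exact Finset.sum_congr rfl fun i _ => Finset.sum_congr rfl fun j _ => by
    rw [hsym j i]; ring

lemma key_lemma (A : Matrix ι ι ℝ)
    (hsym : ∀ i j, A i j = A j i)
    (hpsd : ∀ x : ι → ℝ, 0 ≤ ∑ i, x i * ∑ j, A i j * x j)
    (c : ℝ) (hc : 0 < c) (w b : ι → ℝ) :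
    ∃! x : ι → ℝ, ∀ i,
      c * x i + (∑ j, A i j * x j) + (x i) ^ 3 / 3 + (w i) ^ 2 * x i / 2 = b i := by
  -- uniqueness part
  have huniq : ∀ x y : ι → ℝ,
      (∀ i, c * x i + (∑ j, A i j * x j) + (x i) ^ 3 / 3 + (w i) ^ 2 * x i / 2 = b i) →
      (∀ i, c * y i + (∑ j, A i j * y j) + (y i) ^ 3 / 3 + (w i) ^ 2 * y i / 2 = b i) →
      x = y := by
    intro x y hx hy
    set d : ι → ℝ := fun i => x i - y i with hd
    have h0 : ∀ i, c * d i + (∑ j, A i j * d j) + ((x i) ^ 3 - (y i) ^ 3) / 3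
        + (w i) ^ 2 * d i / 2 = 0 := by
      intro i
      have h1 := hx i
      have h2 := hy i
      have hs : ∑ j, A i j * d j = (∑ j, A i j * x j) - (∑ j, A i j * y j) := by
        rw [← Finset.sum_sub_distrib]
        exact Finset.sum_congr rfl fun j _ => by simp [hd]; ring
      rw [hs]; simp only [hd]; linarith
    have hsum : ∑ i, d i * (c * d i + (∑ j, A i j * d j) + ((x i) ^ 3 - (y i) ^ 3) / 3
        + (w i) ^ 2 * d i / 2) = 0 := by
      rw [Finset.sum_eq_zero]
      intro i _
      rw [h0 i, mul_zero]
    have hexpand : ∑ i, d i * (c * d i + (∑ j, A i j * d j) + ((x i) ^ 3 - (y i) ^ 3) / 3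
        + (w i) ^ 2 * d i / 2)
        = c * ∑ i, (d i) ^ 2 + (∑ i, d i * ∑ j, A i j * d j)
          + ∑ i, d i * ((x i) ^ 3 - (y i) ^ 3) / 3 + ∑ i, (w i) ^ 2 * (d i) ^ 2 / 2 := by
      rw [Finset.mul_sum, ← Finset.sum_add_distrib, ← Finset.sum_add_distrib,
        ← Finset.sum_add_distrib]
      exact Finset.sum_congr rfl fun i _ => by ring
    have hq := hpsd d
    have hcube : ∀ i, 0 ≤ d i * ((x i) ^ 3 - (y i) ^ 3) / 3 := by
      intro i
      have : 0 ≤ (x i - y i) * ((x i) ^ 3 - (y i) ^ 3) := by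
        nlinarith [sq_nonneg (x i - y i), sq_nonneg (x i + y i), sq_nonneg (x i), sq_nonneg (y i)]
      simp only [hd]; linarith
    have h3 : 0 ≤ ∑ i, d i * ((x i) ^ 3 - (y i) ^ 3) / 3 :=
      Finset.sum_nonneg fun i _ => hcube i
    have h4 : 0 ≤ ∑ i, (w i) ^ 2 * (d i) ^ 2 / 2 :=
      Finset.sum_nonneg fun i _ => by positivity
    have h5 : c * ∑ i, (d i) ^ 2 ≤ 0 := by
      rw [hexpand] at hsum; linarith
    have h6 : ∑ i, (d i) ^ 2 = 0 := by
      have hnn : 0 ≤ ∑ i, (d i) ^ 2 := Finset.sum_nonneg fun i _ => sq_nonneg _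
      nlinarith
    have h7 : ∀ i ∈ Finset.univ, (d i) ^ 2 = 0 :=
      (Finset.sum_eq_zero_iff_of_nonneg (fun i _ => sq_nonneg _)).mp h6
    funext i
    have := h7 i (Finset.mem_univ i)
    have : d i = 0 := by
      have := sq_eq_zero_iff.mp this
      exact this
    simp only [hd] at this
    linarith
  -- existence part
  set Phi : (ι → ℝ) → ℝ := fun x => ∑ i, (c / 2 * (x i) ^ 2 + x i * (∑ j, A i j * x j) / 2
      + (x i) ^ 4 / 12 + (w i) ^ 2 * (x i) ^ 2 / 4 - b i * x i) with hPhi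
  have hcont : Continuous Phi := by
    apply continuous_finset_sum
    intro i _
    have h1 : Continuous fun x : ι → ℝ => x i := continuous_apply i
    have h2 : Continuous fun x : ι → ℝ => ∑ j, A i j * x j :=
      continuous_finset_sum _ fun j _ => (continuous_const.mul (continuous_apply j))
    fun_prop
  set C : ℝ := (∑ i, (b i) ^ 2) / c with hC
  have hC0 : 0 ≤ C := div_nonneg (Finset.sum_nonneg fun i _ => sq_nonneg _) hc.le
  have hlow : ∀ x : ι → ℝ, ∀ i, c / 4 * (x i) ^ 2 - C ≤ Phi x := by
    intro x i
    have hsplit : Phi x = (∑ i, x i * (∑ j, A i j * x j)) / 2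
        + ∑ i, (c / 2 * (x i) ^ 2 + (x i) ^ 4 / 12 + (w i) ^ 2 * (x i) ^ 2 / 4 - b i * x i) := by
      rw [hPhi, Finset.sum_div, ← Finset.sum_add_distrib]
      exact Finset.sum_congr rfl fun i _ => by ring
    have hq := hpsd x
    have hterm : ∀ j, c / 4 * (x j) ^ 2 - (b j) ^ 2 / c
        ≤ c / 2 * (x j) ^ 2 + (x j) ^ 4 / 12 + (w j) ^ 2 * (x j) ^ 2 / 4 - b j * x j := by
      intro j
      have h1 : 0 ≤ (x j) ^ 4 / 12 + (w j) ^ 2 * (x j) ^ 2 / 4 := by positivity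
      have h2 : c / 4 * (x j) ^ 2 - (b j) ^ 2 / c ≤ c / 2 * (x j) ^ 2 - b j * x j := by
        have ha : 0 ≤ (c * x j - 2 * b j) ^ 2 / (4 * c) := by positivity
        have heq : (c * x j - 2 * b j) ^ 2 / (4 * c)
            = (c / 2 * (x j) ^ 2 - b j * x j) - (c / 4 * (x j) ^ 2 - (b j) ^ 2 / c) := by
          field_simp
          ring
        linarith [heq ▸ ha]
      linarith
    have h3 : ∑ j, (c / 4 * (x j) ^ 2 - (b j) ^ 2 / c)
        ≤ ∑ j, (c / 2 * (x j) ^ 2 + (x j) ^ 4 / 12 + (w j) ^ 2 * (x j) ^ 2 / 4 - b j * x j) :=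
      Finset.sum_le_sum fun j _ => hterm j
    have h4 : ∑ j, (c / 4 * (x j) ^ 2 - (b j) ^ 2 / c)
        = c / 4 * (∑ j, (x j) ^ 2) - C := by
      rw [Finset.sum_sub_distrib, ← Finset.mul_sum, hC, Finset.sum_div]
    have h5 : (x i) ^ 2 ≤ ∑ j, (x j) ^ 2 :=
      Finset.single_le_sum (fun j _ => sq_nonneg (x j)) (Finset.mem_univ i)
    have h6 : c / 4 * (x i) ^ 2 ≤ c / 4 * ∑ j, (x j) ^ 2 := by
      apply mul_le_mul_of_nonneg_left h5; positivity
    rw [hsplit]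
    linarith
  set R : ℝ := Real.sqrt (4 * (C + 1) / c) with hR
  have hR2 : R ^ 2 = 4 * (C + 1) / c := Real.sq_sqrt (by positivity)
  have hR0 : 0 ≤ R := Real.sqrt_nonneg _
  set K : Set (ι → ℝ) := Set.Icc (fun _ => -R) (fun _ => R) with hK
  have hKc : IsCompact K := isCompact_Icc
  have h0K : (0 : ι → ℝ) ∈ K := by
    rw [hK, Set.mem_Icc]
    exact ⟨fun i => neg_nonpos.mpr hR0, fun i => hR0⟩
  obtain ⟨x, hxK, hxmin⟩ := hKc.exists_isMinOn ⟨0, h0K⟩ hcont.continuousOn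
  have hPhi0 : Phi 0 = 0 := by
    rw [hPhi]; apply Finset.sum_eq_zero; intro i _; simp
  have hout : ∀ y : ι → ℝ, y ∉ K → 1 ≤ Phi y := by
    intro y hy
    have hex : ∃ i, R < |y i| := by
      by_contra hcon
      push_neg at hcon
      refine hy ?_
      rw [hK, Set.mem_Icc]
      constructor
      · intro i
        have h := abs_le.mp (hcon i)
        exact h.1
      · intro i
        have h := abs_le.mp (hcon i)
        exact h.2
    obtain ⟨i, hi⟩ := hex
    have h1 : R ^ 2 ≤ (y i) ^ 2 := by
      have h := pow_le_pow_left₀ hR0 hi.le 2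
      rwa [sq_abs] at h
    have h2 := hlow y i
    have h3 : c / 4 * R ^ 2 ≤ c / 4 * (y i) ^ 2 := by
      apply mul_le_mul_of_nonneg_left h1; positivity
    rw [hR2] at h3
    have heq : c / 4 * (4 * (C + 1) / c) = C + 1 := by field_simp
    linarith [heq ▸ h3]
  have hglob : ∀ y : ι → ℝ, Phi x ≤ Phi y := by
    intro y
    by_cases hy : y ∈ K
    · exact hxmin hy
    · have := hout y hy
      have h0 : Phi x ≤ Phi 0 := hxmin h0K
      rw [hPhi0] at h0
      linarith
  -- directional derivatives vanish
  have hder : ∀ y : ι → ℝ,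
      ∑ i, y i * (c * x i + (∑ j, A i j * x j) + (x i) ^ 3 / 3 + (w i) ^ 2 * x i / 2 - b i)
        = 0 := by
    intro y
    have hp : ∀ i, HasDerivAt (fun t : ℝ => x i + t * y i) (y i) 0 := by
      intro i
      simpa using ((hasDerivAt_id (0 : ℝ)).mul_const (y i)).const_add (x i)
    have hterm : ∀ i : ι, HasDerivAt (fun t : ℝ =>
        c / 2 * (x i + t * y i) ^ 2
          + (x i + t * y i) * (∑ j, A i j * (x j + t * y j)) / 2
          + (x i + t * y i) ^ 4 / 12 + (w i) ^ 2 * (x i + t * y i) ^ 2 / 4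
          - b i * (x i + t * y i))
        (c * x i * y i
          + (y i * (∑ j, A i j * x j) + x i * (∑ j, A i j * y j)) / 2
          + (x i) ^ 3 * y i / 3 + (w i) ^ 2 * x i * y i / 2 - b i * y i) 0 := by
      intro i
      have hinner : HasDerivAt (fun t : ℝ => ∑ j, A i j * (x j + t * y j))
          (∑ j, A i j * y j) 0 :=
        HasDerivAt.fun_sum fun j _ => (hp j).const_mul (A i j)
      have h1 := ((hp i).pow 2).const_mul (c / 2)
      have h2 := ((hp i).mul hinner).div_const 2
      have h3 := ((hp i).pow 4).div_const 12
      have h4 := (((hp i).pow 2).const_mul ((w i) ^ 2)).div_const 4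
      have h5 := (hp i).const_mul (b i)
      have htot := (((h1.add h2).add h3).add h4).sub h5
      refine htot.congr_deriv ?_
      simp only [pow_one, zero_mul, add_zero]
      ring
    have hsum : HasDerivAt (fun t : ℝ => Phi (fun i => x i + t * y i))
        (∑ i, (c * x i * y i
          + (y i * (∑ j, A i j * x j) + x i * (∑ j, A i j * y j)) / 2
          + (x i) ^ 3 * y i / 3 + (w i) ^ 2 * x i * y i / 2 - b i * y i)) 0 := by
      have := HasDerivAt.fun_sum (fun i (_ : i ∈ Finset.univ) => hterm i)
      exact this
    have hmin : IsLocalMin (fun t : ℝ => Phi (fun i => x i + t * y i)) 0 := by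
      apply Filter.Eventually.of_forall
      intro t
      have hx0 : (fun i => x i + (0 : ℝ) * y i) = x := by
        funext i; simp
      simp only [hx0]
      exact hglob _
    have hD := hmin.hasDerivAt_eq_zero hsum
    have hswap := quad_symm A hsym x y
    have hsplit2 : ∑ i, y i * (c * x i + (∑ j, A i j * x j) + (x i) ^ 3 / 3
          + (w i) ^ 2 * x i / 2 - b i)
        = (∑ i, (c * x i * y i
          + (y i * (∑ j, A i j * x j) + x i * (∑ j, A i j * y j)) / 2
          + (x i) ^ 3 * y i / 3 + (w i) ^ 2 * x i * y i / 2 - b i * y i))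
          + ((∑ i, y i * ∑ j, A i j * x j) - (∑ i, x i * ∑ j, A i j * y j)) / 2 := by
      rw [← Finset.sum_sub_distrib, Finset.sum_div, ← Finset.sum_add_distrib]
      exact Finset.sum_congr rfl fun i _ => by ring
    rw [hsplit2, hD, hswap, zero_add]
    simp
  -- conclude
  set g : ι → ℝ := fun i =>
    c * x i + (∑ j, A i j * x j) + (x i) ^ 3 / 3 + (w i) ^ 2 * x i / 2 - b i with hg
  have hgg := hder g
  have hgz : ∀ i, g i = 0 := by
    intro i
    have hnn : ∀ j ∈ Finset.univ, (0 : ℝ) ≤ g j * g j := fun j _ => mul_self_nonneg _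
    have := (Finset.sum_eq_zero_iff_of_nonneg hnn).mp ?_ i (Finset.mem_univ i)
    · exact mul_self_eq_zero.mp this
    · exact hgg
  refine ⟨x, fun i => ?_, fun y hy => huniq y x hy (fun i => ?_)⟩ <;>
    · have := hgz i
      simp only [hg] at this
      linarith


end Aux

section MatAux

variable {M : ℕ}

lemma matD_symm (i j : Fin M) : matD M i j = matD M j i := by
  unfold matD
  rcases eq_or_ne i j with h | h
  · simp [h]
  · rw [if_neg h, if_neg h.symm]
    refine if_congr or_comm rfl (if_congr or_comm rfl rfl)

lemma matD_diag (i : Fin M) : matD M i i = -2 := by simp [matD]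

lemma matD_le_one {i j : Fin M} (h : i ≠ j) : matD M i j ≤ 1 := by
  unfold matD
  rw [if_neg h]
  split_ifs <;> norm_num

lemma matD_offdiag_nonneg {i j : Fin M} (h : i ≠ j) : 0 ≤ matD M i j := by
  unfold matD
  rw [if_neg h]
  split_ifs <;> norm_num

lemma matD_eq_zero [NeZero M] (hM : 2 ≤ M) {i j : Fin M} (h : i ≠ j)
    (h1 : j ≠ i + 1) (h2 : j ≠ i - 1) : matD M i j = 0 := by
  have hv1 : ((1 : Fin M)).1 = 1 := by
    rw [Fin.val_one']
    exact Nat.mod_eq_of_lt (by omega)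
  have hadd : ((i + 1 : Fin M)).1 = (i.1 + 1) % M := by
    rw [Fin.add_def, hv1]
  have hsub : ((i - 1 : Fin M)).1 = (M - 1 + i.1) % M := by
    rw [Fin.sub_def, hv1]
  have hjlt := j.2
  have hilt := i.2
  unfold matD
  rw [if_neg h, if_neg, if_neg]
  · rintro (⟨hi0, hjm⟩ | ⟨hj0, him⟩)
    · refine h2 (Fin.ext ?_)
      rw [hsub, hi0, Nat.add_zero, Nat.mod_eq_of_lt (by omega)]
      omega
    · refine h1 (Fin.ext ?_)
      rw [hadd, him]
      have : M - 1 + 1 = M := by omega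
      rw [this, Nat.mod_self]
      omega
  · rintro (hij | hji)
    · refine h1 (Fin.ext ?_)
      rw [hadd, Nat.mod_eq_of_lt (by omega)]
      omega
    · refine h2 (Fin.ext ?_)
      rw [hsub]
      have he : M - 1 + i.1 = M + j.1 := by omega
      rw [he, Nat.add_mod_left, Nat.mod_eq_of_lt hjlt]

lemma matD_row_sum [NeZero M] (hM : 2 ≤ M) (i : Fin M) : ∑ j, matD M i j ≤ 0 := by
  have hsplit : ∑ j, matD M i j = matD M i i + ∑ j ∈ Finset.univ.erase i, matD M i j :=
    (Finset.add_sum_erase _ _ (Finset.mem_univ i)).symm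
  have hsub : ∑ j ∈ Finset.univ.erase i, matD M i j
      = ∑ j ∈ (Finset.univ.erase i) ∩ {i + 1, i - 1}, matD M i j := by
    refine (Finset.sum_subset (Finset.inter_subset_left) ?_).symm
    intro j hj hnot
    have hji : i ≠ j := (Finset.ne_of_mem_erase hj).symm
    have hmem : j ∉ ({i + 1, i - 1} : Finset (Fin M)) := fun hmem =>
      hnot (Finset.mem_inter.mpr ⟨hj, hmem⟩)
    simp only [Finset.mem_insert, Finset.mem_singleton, not_or] at hmem
    exact matD_eq_zero hM hji hmem.1 hmem.2
  have hbound : ∑ j ∈ (Finset.univ.erase i) ∩ {i + 1, i - 1}, matD M i j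
      ≤ ((Finset.univ.erase i) ∩ {i + 1, i - 1}).card • (1 : ℝ) := by
    apply Finset.sum_le_card_nsmul
    intro j hj
    exact matD_le_one (Finset.ne_of_mem_erase (Finset.mem_inter.mp hj).1).symm
  have hcard : ((Finset.univ.erase i) ∩ {i + 1, i - 1}).card ≤ 2 := by
    calc ((Finset.univ.erase i) ∩ {i + 1, i - 1}).card
        ≤ ({i + 1, i - 1} : Finset (Fin M)).card := Finset.card_le_card Finset.inter_subset_right
      _ ≤ 2 := (Finset.card_insert_le _ _).trans (by simp)
  rw [hsplit, hsub, matD_diag]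
  have h2 : (((Finset.univ.erase i) ∩ {i + 1, i - 1}).card • (1 : ℝ)) ≤ 2 := by
    rw [nsmul_eq_mul, mul_one]
    exact_mod_cast hcard
  linarith

lemma quad_rw {ι : Type*} [Fintype ι] (B : Matrix ι ι ℝ) (x : ι → ℝ) :
    ∑ p, x p * ∑ q, B p q * x q = ∑ p, ∑ q, B p q * (x p * x q) := by
  simp_rw [Finset.mul_sum]
  exact Finset.sum_congr rfl fun p _ => Finset.sum_congr rfl fun q _ => by ring

lemma matD_quad' [NeZero M] (hM : 2 ≤ M) (v : Fin M → ℝ) :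
    ∑ a, ∑ b, matD M a b * (v a * v b) ≤ 0 := by
  have h2 : ∀ a b : Fin M, matD M a b * (v a * v b)
      ≤ matD M a b * (((v a) ^ 2 + (v b) ^ 2) / 2) := by
    intro a b
    rcases eq_or_ne a b with h | h
    · rw [h]
      apply le_of_eq
      ring
    · have hD := matD_offdiag_nonneg h
      have hvv : v a * v b ≤ ((v a) ^ 2 + (v b) ^ 2) / 2 := by
        nlinarith [sq_nonneg (v a - v b)]
      exact mul_le_mul_of_nonneg_left hvv hD
  have h3 : ∑ a, ∑ b, matD M a b * (v a * v b)
      ≤ ∑ a, ∑ b, matD M a b * (((v a) ^ 2 + (v b) ^ 2) / 2) :=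
    Finset.sum_le_sum fun a _ => Finset.sum_le_sum fun b _ => h2 a b
  have h4a : ∑ a, ∑ b, matD M a b * ((v a) ^ 2 / 2) = ∑ a, (v a) ^ 2 / 2 * ∑ b, matD M a b := by
    refine Finset.sum_congr rfl fun a _ => ?_
    rw [Finset.mul_sum]
    exact Finset.sum_congr rfl fun b _ => by ring
  have h4b : ∑ a, ∑ b, matD M a b * ((v b) ^ 2 / 2) = ∑ a, (v a) ^ 2 / 2 * ∑ b, matD M a b := by
    rw [Finset.sum_comm]
    refine Finset.sum_congr rfl fun b _ => ?_
    rw [Finset.mul_sum]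
    exact Finset.sum_congr rfl fun a _ => by rw [matD_symm a b]; ring
  have h4 : ∑ a, ∑ b, matD M a b * (((v a) ^ 2 + (v b) ^ 2) / 2)
      = (∑ a, (v a) ^ 2 / 2 * ∑ b, matD M a b) + (∑ a, (v a) ^ 2 / 2 * ∑ b, matD M a b) := by
    calc ∑ a, ∑ b, matD M a b * (((v a) ^ 2 + (v b) ^ 2) / 2)
        = ∑ a, ∑ b, (matD M a b * ((v a) ^ 2 / 2) + matD M a b * ((v b) ^ 2 / 2)) :=
          Finset.sum_congr rfl fun a _ => Finset.sum_congr rfl fun b _ => by ring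
      _ = (∑ a, ∑ b, matD M a b * ((v a) ^ 2 / 2)) + ∑ a, ∑ b, matD M a b * ((v b) ^ 2 / 2) := by
          simp [Finset.sum_add_distrib]
      _ = _ := by rw [h4a, h4b]
  have h5 : (∑ a, (v a) ^ 2 / 2 * ∑ b, matD M a b) ≤ 0 := by
    apply Finset.sum_nonpos
    intro a _
    have hr := matD_row_sum hM a
    nlinarith [sq_nonneg (v a)]
  linarith


lemma lapMat_symm (h : ℝ) (p q : Fin M × Fin M) : lapMat M h p q = lapMat M h q p := by
  unfold lapMat
  simp only [Matrix.smul_apply, Matrix.add_apply, Matrix.kroneckerMap_apply, smul_eq_mul,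
    Matrix.one_apply]
  have e1 : (if p.1 = q.1 then (1:ℝ) else 0) = (if q.1 = p.1 then 1 else 0) :=
    if_congr eq_comm rfl rfl
  have e2 : (if p.2 = q.2 then (1:ℝ) else 0) = (if q.2 = p.2 then 1 else 0) :=
    if_congr eq_comm rfl rfl
  rw [matD_symm p.2 q.2, matD_symm p.1 q.1, e1, e2]

lemma lapMat_quad_nonpos (hM : 2 ≤ M) (h : ℝ) (x : Fin M × Fin M → ℝ) :
    ∑ p, x p * ∑ q, lapMat M h p q * x q ≤ 0 := by
  haveI : NeZero M := ⟨by omega⟩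
  rw [quad_rw]
  have hsplit : ∑ p, ∑ q, lapMat M h p q * (x p * x q)
      = (h ^ 2)⁻¹ * ((∑ p, ∑ q, ((1 : Matrix (Fin M) (Fin M) ℝ) p.1 q.1 * matD M p.2 q.2) * (x p * x q))
        + (∑ p, ∑ q, (matD M p.1 q.1 * (1 : Matrix (Fin M) (Fin M) ℝ) p.2 q.2) * (x p * x q))) := by
    rw [mul_add, Finset.mul_sum, Finset.mul_sum, ← Finset.sum_add_distrib]
    refine Finset.sum_congr rfl fun p _ => ?_
    rw [Finset.mul_sum, Finset.mul_sum, ← Finset.sum_add_distrib]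
    refine Finset.sum_congr rfl fun q _ => ?_
    unfold lapMat
    simp only [Matrix.smul_apply, Matrix.add_apply, Matrix.kroneckerMap_apply, smul_eq_mul]
    ring
  have hQ1 : (∑ p : Fin M × Fin M, ∑ q : Fin M × Fin M,
      ((1 : Matrix (Fin M) (Fin M) ℝ) p.1 q.1 * matD M p.2 q.2) * (x p * x q)) ≤ 0 := by
    rw [Fintype.sum_prod_type]
    have : ∀ i : Fin M, ∀ a : Fin M, (∑ q : Fin M × Fin M,
        ((1 : Matrix (Fin M) (Fin M) ℝ) i q.1 * matD M a q.2) * (x (i, a) * x q))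
        = ∑ b, matD M a b * (x (i, a) * x (i, b)) := by
      intro i a
      rw [Fintype.sum_prod_type]
      rw [Finset.sum_eq_single i]
      · simp [Matrix.one_apply]
      · intro k _ hk
        simp [Matrix.one_apply, Ne.symm hk]
      · simp
    calc ∑ i, ∑ a, (∑ q : Fin M × Fin M,
          ((1 : Matrix (Fin M) (Fin M) ℝ) i q.1 * matD M a q.2) * (x (i, a) * x q))
        = ∑ i, ∑ a, ∑ b, matD M a b * (x (i, a) * x (i, b)) := by
          exact Finset.sum_congr rfl fun i _ => Finset.sum_congr rfl fun a _ => this i a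
      _ ≤ 0 := Finset.sum_nonpos fun i _ => matD_quad' hM (fun a => x (i, a))
  have hQ2 : (∑ p : Fin M × Fin M, ∑ q : Fin M × Fin M,
      (matD M p.1 q.1 * (1 : Matrix (Fin M) (Fin M) ℝ) p.2 q.2) * (x p * x q)) ≤ 0 := by
    rw [Fintype.sum_prod_type]
    have : ∀ i : Fin M, ∀ a : Fin M, (∑ q : Fin M × Fin M,
        (matD M i q.1 * (1 : Matrix (Fin M) (Fin M) ℝ) a q.2) * (x (i, a) * x q))
        = ∑ k, matD M i k * (x (i, a) * x (k, a)) := by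
      intro i a
      rw [Fintype.sum_prod_type]
      refine Finset.sum_congr rfl fun k _ => ?_
      rw [Finset.sum_eq_single a]
      · simp [Matrix.one_apply]
      · intro b _ hb
        simp [Matrix.one_apply, Ne.symm hb]
      · simp
    calc ∑ i, ∑ a, (∑ q : Fin M × Fin M,
          (matD M i q.1 * (1 : Matrix (Fin M) (Fin M) ℝ) a q.2) * (x (i, a) * x q))
        = ∑ i, ∑ a, ∑ k, matD M i k * (x (i, a) * x (k, a)) := by
          exact Finset.sum_congr rfl fun i _ => Finset.sum_congr rfl fun a _ => this i a
      _ = ∑ a, ∑ i, ∑ k, matD M i k * (x (i, a) * x (k, a)) := Finset.sum_comm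
      _ ≤ 0 := Finset.sum_nonpos fun a _ => matD_quad' hM (fun i => x (i, a))
  rw [hsplit]
  have hpos : (0:ℝ) ≤ (h ^ 2)⁻¹ := by positivity
  have := add_nonpos hQ1 hQ2
  exact mul_nonpos_of_nonneg_of_nonpos hpos this

end MatAux

theorem scheme_unique_solvability (α ε τ h : ℝ) (M : ℕ)
    (hα : α ∈ Set.Ioo (0 : ℝ) 1) (hε : 0 < ε) (hh : 0 < h) (hM : 2 ≤ M)
    (hτ0 : 0 < τ) (hτ : τ < (2 : ℝ) ^ (1 / α) * (2 * α / (α + 1))) :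
    ∀ n : ℕ, 1 ≤ n → ∀ U : ℕ → (Fin M × Fin M → ℝ),
      ∃! x : Fin M × Fin M → ℝ,
        (τ ^ (-α)) • (sftrW α 0 • (x - U 0) +
            ∑ m ∈ Finset.Icc 1 n, sftrW α m • (U (n - m) - U 0)) =
          ε ^ 2 • (lapMat M h).mulVec ((1 / 2 : ℝ) • (x + U (n - 1))) -
            fnl (U (n - 1)) x := by
  intro n hn U
  haveI : NeZero M := ⟨by omega⟩
  obtain ⟨hα0, hα1⟩ := hα
  -- the constant c is positive
  have hK : (0 : ℝ) < 2 * α / (α + 1) := div_pos (by linarith) (by linarith)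
  have hω0 : sftrW α 0 = (2 * α / (α + 1)) ^ α := by simp [sftrW]
  have hτp : (0 : ℝ) < τ ^ α := Real.rpow_pos_of_pos hτ0 α
  have hKp : (0 : ℝ) < (2 * α / (α + 1)) ^ α := Real.rpow_pos_of_pos hK α
  have hτα : τ ^ α < 2 * (2 * α / (α + 1)) ^ α := by
    have h1 : τ ^ α < ((2 : ℝ) ^ (1 / α) * (2 * α / (α + 1))) ^ α :=
      Real.rpow_lt_rpow hτ0.le hτ hα0
    rw [Real.mul_rpow (by positivity) hK.le, ← Real.rpow_mul (by norm_num : (0:ℝ) ≤ 2),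
      one_div, inv_mul_cancel₀ hα0.ne', Real.rpow_one] at h1
    exact h1
  set c : ℝ := τ ^ (-α) * sftrW α 0 - 1 / 2 with hcdef
  have hc : 0 < c := by
    have hneg : τ ^ (-α) = (τ ^ α)⁻¹ := Real.rpow_neg hτ0.le α
    have h2 : 1 / 2 < (τ ^ α)⁻¹ * (2 * α / (α + 1)) ^ α := by
      rw [inv_mul_eq_div, lt_div_iff₀ hτp]
      linarith
    rw [hcdef, hω0, hneg]
    linarith
  -- the matrix A
  set A : Matrix (Fin M × Fin M) (Fin M × Fin M) ℝ :=
    fun p q => -(ε ^ 2 / 2) * lapMat M h p q with hAdef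
  have hsym : ∀ p q, A p q = A q p := by
    intro p q
    rw [hAdef]
    simp only
    rw [lapMat_symm]
  have hpsd : ∀ x : Fin M × Fin M → ℝ, 0 ≤ ∑ p, x p * ∑ q, A p q * x q := by
    intro x
    have he : ∑ p, x p * ∑ q, A p q * x q
        = -(ε ^ 2 / 2) * ∑ p, x p * ∑ q, lapMat M h p q * x q := by
      rw [Finset.mul_sum]
      refine Finset.sum_congr rfl fun p _ => ?_
      rw [hAdef]
      simp only
      rw [Finset.mul_sum, Finset.mul_sum]
      rw [Finset.mul_sum]
      refine Finset.sum_congr rfl fun q _ => by ring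
    rw [he]
    have hquad := lapMat_quad_nonpos hM h x
    nlinarith [sq_nonneg ε]
  set w : Fin M × Fin M → ℝ := U (n - 1) with hwdef
  set b : Fin M × Fin M → ℝ := fun i =>
    τ ^ (-α) * sftrW α 0 * U 0 i
      - τ ^ (-α) * (∑ m ∈ Finset.Icc 1 n, sftrW α m * (U (n - m) i - U 0 i))
      + ε ^ 2 / 2 * (∑ q, lapMat M h i q * U (n - 1) q)
      - (U (n - 1) i) ^ 3 / 6 + U (n - 1) i / 2 with hbdef
  obtain ⟨x, hx, hu⟩ := key_lemma A hsym hpsd c hc w b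
  have hiff : ∀ x : Fin M × Fin M → ℝ,
      ((τ ^ (-α)) • (sftrW α 0 • (x - U 0) +
            ∑ m ∈ Finset.Icc 1 n, sftrW α m • (U (n - m) - U 0)) =
          ε ^ 2 • (lapMat M h).mulVec ((1 / 2 : ℝ) • (x + U (n - 1))) -
            fnl (U (n - 1)) x)
      ↔ ∀ i, c * x i + (∑ j, A i j * x j) + (x i) ^ 3 / 3 + (w i) ^ 2 * x i / 2 = b i := by
    intro x
    rw [funext_iff]
    refine forall_congr' fun i => ?_
    have hmv : ∑ q, lapMat M h i q * (1 / 2 * (x q + U (n - 1) q))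
        = 1 / 2 * (∑ q, lapMat M h i q * x q)
          + 1 / 2 * (∑ q, lapMat M h i q * U (n - 1) q) := by
      rw [Finset.mul_sum, Finset.mul_sum, ← Finset.sum_add_distrib]
      exact Finset.sum_congr rfl fun q _ => by ring
    have hAx : ∑ j, A i j * x j = -(ε ^ 2 / 2) * ∑ q, lapMat M h i q * x q := by
      rw [Finset.mul_sum]
      refine Finset.sum_congr rfl fun q _ => ?_
      rw [hAdef]
      simp only
      ring
    simp only [Pi.smul_apply, Pi.add_apply, Pi.sub_apply, smul_eq_mul, Finset.sum_apply,
      Matrix.mulVec, dotProduct, fnl, hbdef, hwdef]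
    rw [hmv, hAx]
    constructor <;> intro heq
    · linear_combination heq + x i * hcdef
    · linear_combination heq - x i * hcdef
  exact ⟨x, (hiff x).mpr hx, fun y hy => hu y ((hiff y).mp hy)⟩
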